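/- Let (J,Γ) be a standard pair, let x ∈ Ω_J(1) be such that ν_x is dominant with ⟨ν_x, α^∨⟩ = 0 for α ∈ R_J and ⟨ν_x, α^∨⟩ > 0 for all α ∈ R⁺ ∖ R_J, and let u ∈ W_Γ(1). Then for all sufficiently large n, ℓ(u x^{n+n₀}) = ℓ(u xⁿ) + ℓ(x^{n₀}), where n₀ = #W₀. -/

import Mathlib

open scoped Classical

noncomputable section

/-- the group structure on `AddAut A` (composition), as in the older Mathlib (`AddAut.group`) -/
instance AddAut.group (A : Type*) [Add A] : Group (AddAut A) where
  mul g h := AddEquiv.trans h g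
  one := AddEquiv.refl _
  inv := AddEquiv.symm
  mul_assoc _ _ _ := rfl
  one_mul _ := rfl
  mul_one _ := rfl
  inv_mul_cancel := AddEquiv.self_trans_symm

/-- A based root datum `(X, R, Y, R^∨, F₀)`: free abelian groups `X`, `Y` of finite rank
in perfect pairing, a finite set of roots `R ⊆ X` with coroots in `Y`, a set of
simple roots `F₀` and the corresponding positive roots `R⁺`. -/
structure BasedRootDatum where
  /-- the character lattice `X` -/
  X : Type
  [addX : AddCommGroup X]
  [freeX : Module.Free ℤ X]
  [finX : Module.Finite ℤ X]
  /-- the cocharacter lattice `Y` -/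
  Y : Type
  [addY : AddCommGroup Y]
  [freeY : Module.Free ℤ Y]
  [finY : Module.Finite ℤ Y]
  /-- the perfect pairing `⟨ , ⟩ : X × Y → ℤ` -/
  pairing : X →+ Y →+ ℤ
  pairing_inj_left : ∀ x x' : X, (∀ y : Y, pairing x y = pairing x' y) → x = x'
  pairing_inj_right : ∀ y y' : Y, (∀ x : X, pairing x y = pairing x y') → y = y'
  /-- the set of roots `R ⊆ X` -/
  R : Set X
  R_fin : R.Finite
  /-- the coroot `α ↦ α^∨` -/
  coroot : X → Y
  root_coroot_two : ∀ α ∈ R, pairing α (coroot α) = 2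
  neg_mem : ∀ α ∈ R, -α ∈ R
  refl_mem : ∀ α ∈ R, ∀ β ∈ R, β - pairing β (coroot α) • α ∈ R
  /-- the set of simple roots `F₀` -/
  F0 : Set X
  F0_sub : F0 ⊆ R
  /-- the set of positive roots `R⁺` -/
  Rplus : Set X
  Rplus_sub : Rplus ⊆ R
  Rplus_partition : ∀ α ∈ R, (α ∈ Rplus ↔ ¬(-α ∈ Rplus))
  Rplus_closure : ∀ α ∈ R, (α ∈ Rplus ↔ α ∈ AddSubmonoid.closure F0)

namespace BasedRootDatum

attribute [instance] BasedRootDatum.addX BasedRootDatum.freeX BasedRootDatum.finX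
  BasedRootDatum.addY BasedRootDatum.freeY BasedRootDatum.finY

variable (D : BasedRootDatum)

/-- `f` is the reflection `s_α` for the root `α`. -/
def IsReflOf (α : D.X) (f : AddAut D.X) : Prop :=
  ∀ x : D.X, f x = x - D.pairing x (D.coroot α) • α

/-- the finite Weyl group `W₀`, generated by the reflections `s_α`, `α ∈ R` -/
def W0 : Subgroup (AddAut D.X) :=
  Subgroup.closure {f | ∃ α ∈ D.R, D.IsReflOf α f}

/-- the action of `W₀` on the (multiplicative) lattice `X` -/
def φ : D.W0 →* MulAut (Multiplicative D.X) :=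
  { toFun := fun u => AddEquiv.toMultiplicative (u : AddAut D.X)
    map_one' := rfl
    map_mul' := fun _ _ => rfl }

/-- the extended affine Weyl group `W̃ = X ⋊ W₀` -/
abbrev Wt := Multiplicative D.X ⋊[D.φ] D.W0

/-- the translation element `t^λ ∈ W̃` for `λ ∈ X` -/
def trans (lam : D.X) : D.Wt := SemidirectProduct.inl (Multiplicative.ofAdd lam)

/-- the `W₀`-component of `w̃ ∈ W̃` acting on `X` -/
def wact (w : D.Wt) (x : D.X) : D.X := (w.right : AddAut D.X) x

/-- the translation part of `w̃ ∈ W̃` -/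
def tpart (w : D.Wt) : D.X := Multiplicative.toAdd w.left

/-- `(α, k)` is a positive affine root -/
def posAff (a : D.X × ℤ) : Prop :=
  a.1 ∈ D.R ∧ (0 < a.2 ∨ (a.2 = 0 ∧ a.1 ∈ D.Rplus))

/-- the action of `W̃` on affine roots: `(t^λ u)(α, k) = (uα, k - ⟨λ, (uα)^∨⟩)` -/
def affAct (w : D.Wt) (a : D.X × ℤ) : D.X × ℤ :=
  (D.wact w a.1, a.2 - D.pairing (D.tpart w) (D.coroot (D.wact w a.1)))

/-- the length function on `W̃`: the number of positive affine roots made negative,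
equivalently the number of hyperplanes separating `C₀` from `w̃ C₀` -/
def lenT (w : D.Wt) : ℕ :=
  Set.ncard {a : D.X × ℤ | D.posAff a ∧ ¬ D.posAff (D.affAct w a)}

/-- the affine Weyl group `W_aff = ℤR ⋊ W₀ ⊆ W̃`, generated by the affine reflections -/
def Waff : Subgroup D.Wt :=
  Subgroup.closure {w | ∃ α ∈ D.R, ∃ k : ℤ, ∃ u : D.W0,
    D.IsReflOf α (u : AddAut D.X) ∧ w = D.trans (k • α) * SemidirectProduct.inr u}

/-- the set `S_aff` of simple reflections of `W_aff`: the length one elements -/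
def Saff : Set D.Wt := {w | w ∈ D.Waff ∧ D.lenT w = 1}

/-- the length zero subset `Ω ⊆ W̃` -/
def isOmega (w : D.Wt) : Prop := D.lenT w = 0

/-- For `J ⊆ F₀`: the roots `R_J` spanned by `J` -/
def RJ (J : Set D.X) : Set D.X := D.R ∩ (AddSubgroup.closure J : Set D.X)

/-- For `J ⊆ F₀`: the parabolic subgroup `W_J ⊆ W₀` -/
def WJ0 (J : Set D.X) : Subgroup (AddAut D.X) :=
  Subgroup.closure {f | ∃ α ∈ J, D.IsReflOf α f}

/-- membership in `W̃_J = X ⋊ W_J` -/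
def inWtJ (J : Set D.X) (w : D.Wt) : Prop := (w.right : AddAut D.X) ∈ D.WJ0 J

/-- `(α, k)` is a positive affine root of `W̃_J` -/
def posAffJ (J : Set D.X) (a : D.X × ℤ) : Prop :=
  a.1 ∈ D.RJ J ∧ (0 < a.2 ∨ (a.2 = 0 ∧ a.1 ∈ D.Rplus))

/-- the length function `ℓ_J` on `W̃_J` -/
def lenJ (J : Set D.X) (w : D.Wt) : ℕ :=
  Set.ncard {a : D.X × ℤ | D.posAffJ J a ∧ ¬ D.posAffJ J (D.affAct w a)}

/-- the affine Weyl group `(W_J)_aff = ℤR_J ⋊ W_J` -/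
def WJaff (J : Set D.X) : Subgroup D.Wt :=
  Subgroup.closure {w | ∃ α ∈ D.RJ J, ∃ k : ℤ, ∃ u : D.W0,
    D.IsReflOf α (u : AddAut D.X) ∧ w = D.trans (k • α) * SemidirectProduct.inr u}

/-- `J_aff`: the simple reflections of `(W_J)_aff`, i.e. its `ℓ_J`-length one elements -/
def Jaff (J : Set D.X) : Set D.Wt := {w | w ∈ D.WJaff J ∧ D.lenJ J w = 1}

/-- `Ω_J`: the `ℓ_J`-length zero elements of `W̃_J` -/
def isOmegaJ (J : Set D.X) (w : D.Wt) : Prop := D.inWtJ J w ∧ D.lenJ J w = 0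

/-- `w̃ ∈ W̃_J` is `J`-positive -/
def JposT (J : Set D.X) (w : D.Wt) : Prop :=
  D.inWtJ J w ∧ ∀ α ∈ D.Rplus, α ∉ D.RJ J → 0 ≤ D.pairing (D.tpart w) (D.coroot α)

/-- `λ ∈ X` is dominant -/
def dominant (lam : D.X) : Prop := ∀ α ∈ D.Rplus, 0 ≤ D.pairing lam (D.coroot α)

/-- `λ ∈ X⁺(J)`, i.e. `λ` is dominant and `J_λ = J` -/
def inXplusJ (J : Set D.X) (lam : D.X) : Prop :=
  D.dominant lam ∧ ∀ α ∈ D.F0, (D.pairing lam (D.coroot α) = 0 ↔ α ∈ J)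

/-- the length function of the finite Weyl group `W₀`, via inversions -/
def len0 (f : AddAut D.X) : ℕ := Set.ncard {α | α ∈ D.Rplus ∧ f α ∉ D.Rplus}

/-- `u` is a minimal length representative in `W_J u`, i.e. `u ∈ {}^J W₀` -/
def minJW0 (J : Set D.X) (f : AddAut D.X) : Prop :=
  f ∈ D.W0 ∧ ∀ g ∈ D.WJ0 J, D.len0 f ≤ D.len0 (g * f)

end BasedRootDatum


namespace BasedRootDatum

variable (D : BasedRootDatum)

/-- indicator of positivity, as an integer -/
noncomputable def ee (α : D.X) : ℤ := if α ∈ D.Rplus then 1 else 0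

lemma refl_invol {α : D.X} {f : AddAut D.X} (hα : α ∈ D.R) (hf : D.IsReflOf α f) :
    ∀ x : D.X, f (f x) = x := by
  intro x
  rw [hf, hf]
  have h2 := D.root_coroot_two α hα
  simp only [map_sub, map_zsmul, AddMonoidHom.sub_apply, AddMonoidHom.smul_apply,
    smul_eq_mul, h2]
  have h3 : (D.pairing x) (D.coroot α) - (D.pairing x) (D.coroot α) * 2
      = -((D.pairing x) (D.coroot α)) := by ring
  rw [h3, neg_smul]
  abel

lemma W0_maps_R {g : AddAut D.X} (hg : g ∈ D.W0) :
    (∀ α ∈ D.R, g α ∈ D.R) ∧ (∀ α ∈ D.R, g⁻¹ α ∈ D.R) := by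
  induction hg using Subgroup.closure_induction with
  | mem f hf =>
      obtain ⟨α, hα, hrefl⟩ := hf
      have hfwd : ∀ β ∈ D.R, f β ∈ D.R := by
        intro β hβ
        rw [hrefl]
        exact D.refl_mem α hα β hβ
      have hinv : f⁻¹ = f := by
        ext x
        have : f (f x) = x := D.refl_invol hα hrefl x
        calc f⁻¹ x = f⁻¹ (f (f x)) := by rw [this]
        _ = f x := by
            show (f⁻¹ * f) (f x) = f x
            rw [inv_mul_cancel]; rfl
      exact ⟨hfwd, by rw [hinv]; exact hfwd⟩
  | one => exact ⟨fun α hα => hα, fun α hα => hα⟩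
  | mul a b _ _ iha ihb =>
      refine ⟨fun α hα => iha.1 _ (ihb.1 α hα), fun α hα => ?_⟩
      rw [mul_inv_rev]
      exact ihb.2 _ (iha.2 α hα)
  | inv a _ iha => exact ⟨iha.2, by simpa using iha.1⟩

lemma tpart_mul (a b : D.Wt) : D.tpart (a * b) = D.tpart a + D.wact a (D.tpart b) := rfl

lemma wact_mul (a b : D.Wt) (x : D.X) : D.wact (a * b) x = D.wact a (D.wact b x) := rfl

lemma tpart_trans (lam : D.X) : D.tpart (D.trans lam) = lam := rfl

lemma wact_trans (lam : D.X) (x : D.X) : D.wact (D.trans lam) x = x := rfl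

lemma trans_mul (a b : D.X) : D.trans a * D.trans b = D.trans (a + b) := by
  unfold trans
  rw [← map_mul]
  rfl

lemma trans_pow (a : D.X) (q : ℕ) : (D.trans a) ^ q = D.trans (q • a) := by
  induction q with
  | zero => simp [trans]
  | succ n ih =>
      rw [pow_succ, ih, trans_mul, succ_nsmul]

lemma wact_mem_R (w : D.Wt) {α : D.X} (hα : α ∈ D.R) : D.wact w α ∈ D.R :=
  (D.W0_maps_R w.right.2).1 α hα

lemma wact_nsmul (w : D.Wt) (q : ℕ) (x : D.X) : D.wact w (q • x) = q • D.wact w x :=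
  map_nsmul (w.right : AddAut D.X).toAddMonoidHom q x

/-- the general length formula for elements of `W̃` -/
lemma lenT_eq (w : D.Wt) :
    D.lenT w = ∑ α ∈ D.R_fin.toFinset,
      (D.pairing (D.tpart w) (D.coroot (D.wact w α)) + D.ee α - D.ee (D.wact w α)).toNat := by
  classical
  set c : D.X → ℤ := fun α => D.pairing (D.tpart w) (D.coroot (D.wact w α)) with hc
  have key : ∀ α k, (D.posAff (α, k) ∧ ¬ D.posAff (D.affAct w (α, k))) ↔
      (α ∈ D.R ∧ 1 - D.ee α ≤ k ∧ k < c α - D.ee (D.wact w α) + 1) := by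
    intro α k
    by_cases hαR : α ∈ D.R
    · have hβR : D.wact w α ∈ D.R := D.wact_mem_R w hαR
      by_cases h1 : α ∈ D.Rplus <;> by_cases h2 : D.wact w α ∈ D.Rplus <;>
        (simp [posAff, affAct, ee, hc, hαR, hβR, h1, h2]; try omega)
    · constructor
      · rintro ⟨⟨h, _⟩, _⟩; exact absurd h hαR
      · rintro ⟨h, _⟩; exact absurd h hαR
  set emb : D.X → (ℤ ↪ D.X × ℤ) := fun α =>
    ⟨fun k => (α, k), fun a b h => by simpa using h⟩ with hemb
  set F : Finset (D.X × ℤ) := D.R_fin.toFinset.biUnion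
    (fun α => (Finset.Ico (1 - D.ee α) (c α - D.ee (D.wact w α) + 1)).map (emb α)) with hF
  have hset : {a : D.X × ℤ | D.posAff a ∧ ¬ D.posAff (D.affAct w a)} = ↑F := by
    ext ⟨α, k⟩
    simp only [Set.mem_setOf_eq, key, hF, Finset.coe_biUnion, Set.mem_iUnion,
      Finset.mem_coe, Finset.mem_map, Finset.mem_Ico, Set.Finite.mem_toFinset, hemb,
      Function.Embedding.coeFn_mk]
    constructor
    · rintro ⟨h1, h2, h3⟩
      exact ⟨α, h1, k, ⟨h2, h3⟩, rfl⟩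
    · rintro ⟨β, hβ, j, ⟨hj1, hj2⟩, heq⟩
      obtain ⟨rfl, rfl⟩ : β = α ∧ j = k := Prod.ext_iff.mp heq
      exact ⟨hβ, hj1, hj2⟩
  rw [lenT, hset, Set.ncard_coe_finset, hF]
  rw [Finset.card_biUnion]
  · apply Finset.sum_congr rfl
    intro α _
    rw [Finset.card_map, Int.card_Ico]
    congr 1
    ring
  · intro a _ b _ hab
    simp only [Finset.disjoint_left, Finset.mem_map, Finset.mem_Ico, hemb,
      Function.Embedding.coeFn_mk]
    rintro ⟨α, k⟩ ⟨j, _, heq⟩ ⟨j', _, heq'⟩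
    apply hab
    have h1 : a = α := (Prod.ext_iff.mp heq).1
    have h2 : b = α := (Prod.ext_iff.mp heq').1
    rw [h1, h2]

end BasedRootDatum


lemma addAut_fix_inv {A : Type*} [AddCommGroup A] {f : AddAut A} {l : A}
    (h : f l = l) : f⁻¹ l = l := by
  calc f⁻¹ l = f⁻¹ (f l) := by rw [h]
  _ = l := by
      show (f⁻¹ * f) l = l
      rw [inv_mul_cancel]
      rfl

lemma toNat_key (L C : ℤ) (q : ℕ) (hq : C.natAbs ≤ q) :
    (((q : ℤ) + 1) * L + C).toNat = ((q : ℤ) * L + C).toNat + L.toNat := by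
  have e : ((q : ℤ) + 1) * L + C = ((q : ℤ) * L + C) + L := by ring
  rw [e]
  rcases lt_trichotomy L 0 with h | h | h
  · have h1 : (q : ℤ) * L ≤ -(q : ℤ) := by
      have := mul_le_mul_of_nonneg_left (show L ≤ -1 by omega)
        (show (0:ℤ) ≤ (q:ℤ) from Int.natCast_nonneg q)
      linarith
    generalize (q : ℤ) * L = A at h1 ⊢
    omega
  · rw [h]; simp
  · have h1 : (q : ℤ) ≤ (q : ℤ) * L := by
      have := mul_le_mul_of_nonneg_left (show (1:ℤ) ≤ L by omega)
        (show (0:ℤ) ≤ (q:ℤ) from Int.natCast_nonneg q)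
      linarith
    generalize (q : ℤ) * L = A at h1 ⊢
    omega

/-- **Proposition 5.5(2) (He–Nie)**. Let `(J, Γ)` be a standard pair, `x ∈ Ω_J(1)` with
`ν_x` dominant, `⟨ν_x, α^∨⟩ = 0` on `R_J` and `⟨ν_x, α^∨⟩ > 0` on `R⁺ ∖ R_J`, and
`u ∈ W_Γ(1)`. Then for all sufficiently large `n`,
`ℓ(u x^{n+n₀}) = ℓ(u xⁿ) + ℓ(x^{n₀})`, where `n₀ = #W₀`. -/
theorem len_u_xn_add (D : BasedRootDatum) (G : Type) [Group G]
    (π : G →* D.Wt) (π_surj : Function.Surjective π)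
    (Z_fin : Finite π.ker) (Z_comm : ∀ z w : π.ker, z * w = w * z)
    (J : Set D.X) (hJ : J ⊆ D.F0)
    (Γ : Set D.Wt) (hΓ : Γ ⊆ D.Jaff J) (hΓfin : Finite (Subgroup.closure Γ))
    (x : G) (hx : D.isOmegaJ J (π x))
    (lam : D.X) (hlam : π (x ^ Nat.card D.W0) = D.trans lam)
    (hdom : D.dominant lam)
    (hzero : ∀ α ∈ D.RJ J, D.pairing lam (D.coroot α) = 0)
    (hpos : ∀ α ∈ D.Rplus, α ∉ D.RJ J → 0 < D.pairing lam (D.coroot α))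
    (u : G) (hu : π u ∈ Subgroup.closure Γ) :
    ∃ N : ℕ, ∀ n ≥ N,
      D.lenT (π (u * x ^ (n + Nat.card D.W0))) =
        D.lenT (π (u * x ^ n)) + D.lenT (π (x ^ Nat.card D.W0)) := by
  classical
  set n₀ := Nat.card D.W0 with hn₀
  rcases Nat.eq_zero_or_pos n₀ with h0 | hpos₀
  · -- degenerate case `n₀ = 0`
    refine ⟨0, fun n _ => ?_⟩
    have haff : ∀ a : D.X × ℤ, D.affAct 1 a = a := by
      intro a
      have h1 : D.wact 1 a.1 = a.1 := rfl
      have h2 : D.tpart (1 : D.Wt) = 0 := rfl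
      rw [show D.affAct 1 a
          = (D.wact 1 a.1, a.2 - D.pairing (D.tpart 1) (D.coroot (D.wact 1 a.1))) from rfl,
        h1, h2, map_zero, AddMonoidHom.zero_apply, sub_zero]
    have hone : D.lenT (1 : D.Wt) = 0 := by
      have : {a : D.X × ℤ | D.posAff a ∧ ¬ D.posAff (D.affAct 1 a)} = ∅ := by
        ext a
        simp only [Set.mem_setOf_eq, Set.mem_empty_iff_false, iff_false, not_and, not_not]
        intro h
        rwa [haff]
      have hdef : D.lenT 1
          = Set.ncard {a : D.X × ℤ | D.posAff a ∧ ¬ D.posAff (D.affAct 1 a)} := rfl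
      rw [hdef, this, Set.ncard_empty]
    rw [h0]
    simp only [add_zero, pow_zero, map_one, hone]
  · -- main case `n₀ ≥ 1`
    set y := π x with hy
    set v := π u with hv
    have hΓW : Subgroup.closure Γ ≤ D.WJaff J :=
      (Subgroup.closure_le _).2 (fun w hw => (hΓ hw).1)
    have hfix : ∀ w ∈ D.WJaff J, ((w.right : AddAut D.X) lam = lam) := by
      intro w hw
      induction hw using Subgroup.closure_induction with
      | mem g hg =>
          obtain ⟨α, hα, k, u', hrefl, rfl⟩ := hg
          simp only [BasedRootDatum.trans, SemidirectProduct.mul_right,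
            SemidirectProduct.right_inl, SemidirectProduct.right_inr, one_mul]
          rw [hrefl lam, hzero α hα, zero_smul, sub_zero]
      | one => rfl
      | mul a b ha hb iha ihb =>
          simp only [SemidirectProduct.mul_right, MulMemClass.coe_mul, AddAut.mul_apply]
          show (a.right : AddAut D.X) ((b.right : AddAut D.X) lam) = lam
          rw [ihb, iha]
      | inv a ha iha =>
          simp only [SemidirectProduct.inv_right, InvMemClass.coe_inv]
          exact addAut_fix_inv iha
    have hvfix : D.wact v lam = lam := hfix v (hΓW hu)
    -- the key length formula
    have hkey : ∀ q r : ℕ, D.lenT (v * (D.trans lam) ^ q * y ^ r) =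
        ∑ α ∈ D.R_fin.toFinset,
          ((q : ℤ) * D.pairing lam (D.coroot (D.wact (v * y ^ r) α)) +
            (D.pairing (D.tpart (v * y ^ r)) (D.coroot (D.wact (v * y ^ r) α)) +
              D.ee α - D.ee (D.wact (v * y ^ r) α))).toNat := by
      intro q r
      have hw : ∀ β : D.X, D.wact (v * (D.trans lam) ^ q * y ^ r) β
          = D.wact (v * y ^ r) β := by
        intro β
        rw [D.trans_pow, D.wact_mul, D.wact_mul, D.wact_trans, ← D.wact_mul]
      have ht : D.tpart (v * (D.trans lam) ^ q * y ^ r)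
          = q • lam + D.tpart (v * y ^ r) := by
        rw [D.trans_pow, D.tpart_mul (v * D.trans (q • lam)) (y ^ r),
          D.tpart_mul v (D.trans (q • lam)), D.tpart_trans, D.tpart_mul v (y ^ r),
          D.wact_mul, D.wact_trans, D.wact_nsmul, hvfix]
        abel
      rw [D.lenT_eq]
      apply Finset.sum_congr rfl
      intro α _
      rw [hw, ht]
      congr 1
      rw [map_add, AddMonoidHom.add_apply, map_nsmul, AddMonoidHom.nsmul_apply,
        nsmul_eq_mul]
      ring
    have htrans : D.lenT (D.trans lam) = ∑ α ∈ D.R_fin.toFinset,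
        (D.pairing lam (D.coroot α)).toNat := by
      rw [D.lenT_eq]
      apply Finset.sum_congr rfl
      intro α _
      rw [D.wact_trans, D.tpart_trans]
      congr 1
      ring
    have hreindex : ∀ r : ℕ, ∑ α ∈ D.R_fin.toFinset,
        (D.pairing lam (D.coroot α)).toNat
        = ∑ α ∈ D.R_fin.toFinset,
          (D.pairing lam (D.coroot (D.wact (v * y ^ r) α))).toNat := by
      intro r
      set g : D.Wt := v * y ^ r with hg
      refine (Finset.sum_nbij' (i := fun α => D.wact g α)
        (j := fun β => ((g.right : AddAut D.X))⁻¹ β) ?_ ?_ ?_ ?_ ?_).symm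
      · intro α hα
        rw [Set.Finite.mem_toFinset] at hα ⊢
        exact D.wact_mem_R g hα
      · intro β hβ
        rw [Set.Finite.mem_toFinset] at hβ ⊢
        exact (D.W0_maps_R g.right.2).2 β hβ
      · intro α _
        show ((g.right : AddAut D.X))⁻¹ (D.wact g α) = α
        have : D.wact g α = (g.right : AddAut D.X) α := rfl
        rw [this]
        show (((g.right : AddAut D.X))⁻¹ * (g.right : AddAut D.X)) α = α
        rw [inv_mul_cancel]
        rfl
      · intro β _
        show D.wact g (((g.right : AddAut D.X))⁻¹ β) = β
        show ((g.right : AddAut D.X) * ((g.right : AddAut D.X))⁻¹) β = β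
        rw [mul_inv_cancel]
        rfl
      · intro α _
        rfl
    -- choose the bound
    set Cc : ℕ → D.X → ℤ := fun r α =>
      D.pairing (D.tpart (v * y ^ r)) (D.coroot (D.wact (v * y ^ r) α)) +
        D.ee α - D.ee (D.wact (v * y ^ r) α) with hCc
    set Q : ℕ := (Finset.range n₀).sup
      (fun r => D.R_fin.toFinset.sup (fun α => (Cc r α).natAbs)) with hQ
    refine ⟨n₀ * (Q + 1), fun n hn => ?_⟩
    set q := n / n₀ with hq
    set r := n % n₀ with hrdef
    have hmod : n = n₀ * q + r := (Nat.div_add_mod n n₀).symm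
    have hrlt : r < n₀ := Nat.mod_lt _ hpos₀
    have hqQ : Q + 1 ≤ q := by
      rw [hq, Nat.le_div_iff_mul_le hpos₀]
      calc (Q + 1) * n₀ = n₀ * (Q + 1) := by ring
      _ ≤ n := hn
    have hπ : ∀ m q', m = n₀ * q' + r → π (u * x ^ m) = v * (D.trans lam) ^ q' * y ^ r := by
      intro m q' hm
      have hxm : x ^ m = (x ^ n₀) ^ q' * x ^ r := by rw [hm, pow_add, pow_mul]
      rw [map_mul, hxm, map_mul, map_pow (π) (x ^ n₀) q', hlam, map_pow, ← hy, ← hv,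
        ← mul_assoc]
    have e1 : π (u * x ^ (n + n₀)) = v * (D.trans lam) ^ (q + 1) * y ^ r :=
      hπ _ (q + 1) (by rw [Nat.mul_add, Nat.mul_one]; omega)
    have e2 : π (u * x ^ n) = v * (D.trans lam) ^ q * y ^ r := hπ _ q hmod
    rw [e1, e2, hlam, hkey (q + 1) r, hkey q r, htrans, hreindex r,
      ← Finset.sum_add_distrib]
    apply Finset.sum_congr rfl
    intro α hα
    have hCq : (Cc r α).natAbs ≤ q := by
      have h1 : (Cc r α).natAbs ≤ D.R_fin.toFinset.sup (fun β => (Cc r β).natAbs) :=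
        Finset.le_sup (f := fun β => (Cc r β).natAbs) hα
      have h2 : D.R_fin.toFinset.sup (fun β => (Cc r β).natAbs) ≤ Q :=
        Finset.le_sup (f := fun r => D.R_fin.toFinset.sup (fun α => (Cc r α).natAbs))
          (Finset.mem_range.mpr hrlt)
      omega
    have hkey2 := toNat_key (D.pairing lam (D.coroot (D.wact (v * y ^ r) α))) (Cc r α) q hCq
    rw [hCc] at hkey2
    simp only at hkey2
    push_cast
    convert hkey2 using 3 <;> ring
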